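/- Let φ₁, φ₂ ∈ 𝒮(ℝⁿ) both satisfy ∫φᵢ = 1 and ∫x^αφᵢ(x)dx = 0 for all α ≠ 0; equivalently φ̂₁(0) = φ̂₂(0) = 1 and ∂^α(φ̂₁ − φ̂₂)(0) = 0 for all α. Let (g_ε)_ε be a net of smooth functions with: there is N with sup_ε ε^N‖x^α∂^β g_ε‖_{L^∞} < ∞ for all α, β, and let (u_ε)_ε ∈ ℰ_τ(ℝⁿ). Then the net of numbers I_ε = ∫_{ℝⁿ} g_ε(x) u_ε(x)(φ̂₁(εx) − φ̂₂(εx)) dx is negligible: for every q ∈ ℕ, sup_{ε∈(0,1]} ε^{−q}|I_ε| < ∞. -/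
import Mathlib


open Set MeasureTheory

/-- Japanese bracket `⟨z⟩ = (1+|z|²)^(1/2)`. -/
noncomputable def jap {V : Type*} [NormedAddCommGroup V] (z : V) : ℝ :=
  Real.sqrt (1 + ‖z‖ ^ 2)


lemma schwartz_vanish_bound {n : ℕ} (ψ : SchwartzMap (Fin n → ℝ) ℂ)
    (hder : ∀ K : ℕ, iteratedFDeriv ℝ K (⇑ψ) 0 = 0) (m : ℕ) :
    ∃ C : ℝ, 0 ≤ C ∧ ∀ y, ‖ψ y‖ ≤ C * ‖y‖ ^ m := by
  have key : ∀ m k : ℕ, ∃ C : ℝ, 0 ≤ C ∧ ∀ y : Fin n → ℝ, ‖y‖ ≤ 1 →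
      ‖iteratedFDeriv ℝ k (⇑ψ) y‖ ≤ C * ‖y‖ ^ m := by
    intro m
    induction m with
    | zero =>
      intro k
      obtain ⟨C, hC⟩ := (isCompact_closedBall (0 : Fin n → ℝ) 1).exists_bound_of_continuousOn
        (f := iteratedFDeriv ℝ k (⇑ψ))
        ((ψ.smooth ⊤).continuous_iteratedFDeriv (by exact_mod_cast le_top)).continuousOn
      refine ⟨max C 0, le_max_right _ _, fun y hy => ?_⟩
      simp only [pow_zero, mul_one]
      exact (hC y (by simpa [Metric.mem_closedBall, dist_zero_right] using hy)).trans
        (le_max_left _ _)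
    | succ m ih =>
      intro k
      obtain ⟨C, hC0, hC⟩ := ih (k + 1)
      refine ⟨C, hC0, fun y hy => ?_⟩
      have hdiffable : Differentiable ℝ (iteratedFDeriv ℝ k (⇑ψ)) :=
        (ψ.smooth ⊤).differentiable_iteratedFDeriv (by exact_mod_cast (lt_top_iff_ne_top.2 (by simp) : (k:ℕ∞) < ⊤))
      have hbound : ∀ z ∈ Metric.closedBall (0 : Fin n → ℝ) ‖y‖,
          ‖fderiv ℝ (iteratedFDeriv ℝ k (⇑ψ)) z‖ ≤ C * ‖y‖ ^ m := by
        intro z hz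
        rw [Metric.mem_closedBall, dist_zero_right] at hz
        rw [norm_fderiv_iteratedFDeriv]
        calc ‖iteratedFDeriv ℝ (k + 1) (⇑ψ) z‖ ≤ C * ‖z‖ ^ m := hC z (hz.trans hy)
          _ ≤ C * ‖y‖ ^ m := by
            gcongr
      have := Convex.norm_image_sub_le_of_norm_fderiv_le (fun z _ => hdiffable z) hbound
        (convex_closedBall (0 : Fin n → ℝ) ‖y‖)
        (Metric.mem_closedBall_self (norm_nonneg y))
        (show y ∈ Metric.closedBall (0 : Fin n → ℝ) ‖y‖ by
          simp [Metric.mem_closedBall, dist_zero_right])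
      rw [hder k, sub_zero, sub_zero] at this
      calc ‖iteratedFDeriv ℝ k (⇑ψ) y‖ ≤ C * ‖y‖ ^ m * ‖y‖ := this
        _ = C * ‖y‖ ^ (m + 1) := by ring
  obtain ⟨C1, hC10, hC1⟩ := key m 0
  obtain ⟨B, hB0, hB⟩ := ψ.decay 0 0
  refine ⟨max C1 B, le_trans hC10 (le_max_left _ _), fun y => ?_⟩
  rcases le_or_gt ‖y‖ 1 with hy | hy
  · have := hC1 y hy
    rw [norm_iteratedFDeriv_zero] at this
    exact this.trans (by gcongr; exact le_max_left _ _)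
  · have h1 : ‖ψ y‖ ≤ B := by simpa using hB y
    calc ‖ψ y‖ ≤ B * 1 := by simpa using h1
      _ ≤ max C1 B * ‖y‖ ^ m :=
        mul_le_mul (le_max_right _ _) (one_le_pow₀ hy.le) zero_le_one
          (le_trans hB0.le (le_max_right _ _))

lemma jap_le_one_add_norm {V : Type*} [NormedAddCommGroup V] (x : V) :
    jap x ≤ 1 + ‖x‖ := by
  rw [jap]
  have h : 1 + ‖x‖ ^ 2 ≤ (1 + ‖x‖) ^ 2 := by nlinarith [norm_nonneg x]
  calc Real.sqrt (1 + ‖x‖ ^ 2) ≤ Real.sqrt ((1 + ‖x‖) ^ 2) := Real.sqrt_le_sqrt h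
    _ = 1 + ‖x‖ := Real.sqrt_sq (by positivity)

lemma jap_nonneg {V : Type*} [NormedAddCommGroup V] (x : V) : 0 ≤ jap x :=
  Real.sqrt_nonneg _

lemma one_add_pow_le (t : ℝ) (ht : 0 ≤ t) (a : ℕ) :
    (1 + t) ^ a ≤ 2 ^ a * (1 + t ^ a) := by
  rcases le_total t 1 with hx | hx
  · have h1 : (1 + t) ^ a ≤ 2 ^ a := pow_le_pow_left₀ (by linarith) (by linarith) a
    have h2 : (2:ℝ) ^ a ≤ 2 ^ a * (1 + t ^ a) := by
      nlinarith [pow_nonneg ht a, pow_pos (show (0:ℝ) < 2 by norm_num) a]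
    linarith
  · have h1 : (1 + t) ^ a ≤ (2 * t) ^ a := pow_le_pow_left₀ (by linarith) (by linarith) a
    have h2 : (2 * t) ^ a = 2 ^ a * t ^ a := mul_pow 2 t a
    have h3 : (2:ℝ) ^ a * t ^ a ≤ 2 ^ a * (1 + t ^ a) := by
      nlinarith [pow_pos (show (0:ℝ) < 2 by norm_num) a]
    linarith

/-- If `φ̂₁ − φ̂₂` has all derivatives vanishing at `0`, `g_ε` is an `𝒮`-regular net and
`u_ε` is tempered moderate, then `∫ g_ε u_ε (φ̂₁(ε·) − φ̂₂(ε·))` is negligible. -/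
theorem stmt19 {n : ℕ} (Φ₁ Φ₂ : SchwartzMap (Fin n → ℝ) ℂ)
    (h0 : Φ₁ 0 = 1) (h0' : Φ₂ 0 = 1)
    (hder : ∀ K : ℕ, iteratedFDeriv ℝ K (fun x => Φ₁ x - Φ₂ x) 0 = 0)
    (g : ℝ → (Fin n → ℝ) → ℂ) (N : ℕ)
    (hgsm : ∀ ε ∈ Set.Ioc (0 : ℝ) 1, ContDiff ℝ (⊤ : ℕ∞) (g ε))
    (hg : ∀ a b : ℕ, ∃ c : ℝ, ∀ ε ∈ Set.Ioc (0 : ℝ) 1, ∀ x,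
      ‖x‖ ^ a * ‖iteratedFDeriv ℝ b (g ε) x‖ ≤ c * ε⁻¹ ^ N)
    (u : ℝ → (Fin n → ℝ) → ℂ)
    (husm : ∀ ε ∈ Set.Ioc (0 : ℝ) 1, ContDiff ℝ (⊤ : ℕ∞) (u ε))
    (hu : ∀ K : ℕ, ∃ M : ℕ, ∃ c : ℝ, ∀ ε ∈ Set.Ioc (0 : ℝ) 1, ∀ x,
      ‖iteratedFDeriv ℝ K (u ε) x‖ ≤ c * jap x ^ M * ε⁻¹ ^ M) :
    ∀ q : ℕ, ∃ c : ℝ, ∀ ε ∈ Set.Ioc (0 : ℝ) 1,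
      ‖∫ x, g ε x * u ε x * (Φ₁ (ε • x) - Φ₂ (ε • x))‖ ≤ c * ε ^ q := by
  intro q
  set ψ : SchwartzMap (Fin n → ℝ) ℂ := Φ₁ - Φ₂ with hψdef
  have hψfun : ⇑ψ = fun x => Φ₁ x - Φ₂ x := by
    funext x; simp [hψdef, SchwartzMap.sub_apply]
  have hderψ : ∀ K, iteratedFDeriv ℝ K (⇑ψ) 0 = 0 := by
    intro K; rw [hψfun]; exact hder K
  obtain ⟨M, cu, hcu⟩ := hu 0
  set m : ℕ := q + M + N with hm
  obtain ⟨cψ, hcψ0, hcψ⟩ := schwartz_vanish_bound ψ hderψ m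
  set a : ℕ := M + m + (n + 1) with ha
  obtain ⟨c0, hc0⟩ := hg 0 0
  obtain ⟨ca, hca⟩ := hg a 0
  set cg : ℝ := 2 ^ a * (max c0 0 + max ca 0) with hcg
  have hcg0 : 0 ≤ cg := by positivity
  set cu' : ℝ := max cu 0 with hcu'
  have hcu'0 : 0 ≤ cu' := le_max_right _ _
  -- the integrable kernel
  have hker : Integrable (fun x : Fin n → ℝ => ((1 + ‖x‖) ^ (n + 1))⁻¹) := by
    have hnr : (Module.finrank ℝ (Fin n → ℝ) : ℝ) < ((n : ℝ) + 1) := by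
      rw [Module.finrank_fin_fun]; norm_num
    refine (integrable_one_add_norm (μ := volume) hnr).congr
      (Filter.Eventually.of_forall fun x => ?_)
    have h1 : (0:ℝ) < 1 + ‖x‖ := by positivity
    show (1 + ‖x‖ : ℝ) ^ (-((n:ℝ) + 1)) = ((1 + ‖x‖) ^ (n + 1))⁻¹
    rw [show -((n:ℝ) + 1) = -((n + 1 : ℕ) : ℝ) by push_cast; ring,
      Real.rpow_neg h1.le, Real.rpow_natCast]
  set Kn : ℝ := ∫ x : Fin n → ℝ, ((1 + ‖x‖) ^ (n + 1))⁻¹ with hKn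
  refine ⟨cg * cu' * cψ * Kn, fun ε hε => ?_⟩
  obtain ⟨hε0, hε1⟩ := hε
  have hεne : ε ≠ 0 := hε0.ne'
  set D : ℝ := cg * cu' * cψ * ε ^ q with hD
  have hD0 : 0 ≤ D := by positivity
  -- pointwise bound
  have hpt : ∀ x : Fin n → ℝ, ‖g ε x * u ε x * (Φ₁ (ε • x) - Φ₂ (ε • x))‖ ≤
      D * ((1 + ‖x‖) ^ (n + 1))⁻¹ := by
    intro x
    set P : ℝ := 1 + ‖x‖ with hP
    have hP1 : (1:ℝ) ≤ P := by rw [hP]; linarith [norm_nonneg x]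
    have hP0 : (0:ℝ) < P := lt_of_lt_of_le one_pos hP1
    -- bound for g
    have h1 : ‖g ε x‖ ≤ max c0 0 * ε⁻¹ ^ N := by
      have := hc0 ε ⟨hε0, hε1⟩ x
      rw [pow_zero, one_mul, norm_iteratedFDeriv_zero] at this
      exact this.trans (mul_le_mul_of_nonneg_right (le_max_left _ _) (by positivity))
    have h2 : ‖x‖ ^ a * ‖g ε x‖ ≤ max ca 0 * ε⁻¹ ^ N := by
      have := hca ε ⟨hε0, hε1⟩ x
      rw [norm_iteratedFDeriv_zero] at this
      exact this.trans (mul_le_mul_of_nonneg_right (le_max_left _ _) (by positivity))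
    have hPa : P ^ a ≤ 2 ^ a * (1 + ‖x‖ ^ a) := by
      rw [hP]; exact one_add_pow_le ‖x‖ (norm_nonneg x) a
    have hA : ‖g ε x‖ * P ^ a ≤ cg * ε⁻¹ ^ N := by
      calc ‖g ε x‖ * P ^ a ≤ ‖g ε x‖ * (2 ^ a * (1 + ‖x‖ ^ a)) :=
            mul_le_mul_of_nonneg_left hPa (norm_nonneg _)
        _ = 2 ^ a * (‖g ε x‖ + ‖x‖ ^ a * ‖g ε x‖) := by ring
        _ ≤ 2 ^ a * (max c0 0 * ε⁻¹ ^ N + max ca 0 * ε⁻¹ ^ N) := by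
            apply mul_le_mul_of_nonneg_left _ (by positivity)
            exact add_le_add h1 h2
        _ = cg * ε⁻¹ ^ N := by rw [hcg]; ring
    -- bound for u
    have hjap : jap x ≤ P := by
      rw [hP]; exact jap_le_one_add_norm x
    have hB : ‖u ε x‖ ≤ cu' * P ^ M * ε⁻¹ ^ M := by
      have h := hcu ε ⟨hε0, hε1⟩ x
      rw [norm_iteratedFDeriv_zero] at h
      refine h.trans (mul_le_mul_of_nonneg_right ?_ (by positivity))
      exact mul_le_mul (le_max_left _ _)
        (pow_le_pow_left₀ (jap_nonneg x) hjap M)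
        (pow_nonneg (jap_nonneg x) M) hcu'0
    -- bound for ψ
    have hCb : ‖Φ₁ (ε • x) - Φ₂ (ε • x)‖ ≤ cψ * ε ^ m * P ^ m := by
      have := hcψ (ε • x)
      rw [hψfun] at this
      simp only at this
      refine this.trans ?_
      rw [norm_smul, Real.norm_eq_abs, abs_of_pos hε0, mul_pow]
      rw [mul_assoc]
      apply mul_le_mul_of_nonneg_left _ hcψ0
      apply mul_le_mul_of_nonneg_left _ (by positivity)
      apply pow_le_pow_left₀ (norm_nonneg x)
      simp [hP]
    -- combine
    rw [← div_eq_mul_inv, le_div_iff₀ (by positivity)]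
    have hεq : ε⁻¹ ^ N * (ε⁻¹ ^ M * ε ^ m) = ε ^ q := by
      rw [hm, inv_pow, inv_pow]
      field_simp
      ring
    calc ‖g ε x * u ε x * (Φ₁ (ε • x) - Φ₂ (ε • x))‖ * P ^ (n + 1)
        = ‖g ε x‖ * ‖u ε x‖ * ‖Φ₁ (ε • x) - Φ₂ (ε • x)‖ * P ^ (n + 1) := by
          rw [norm_mul, norm_mul]
      _ ≤ ‖g ε x‖ * (cu' * P ^ M * ε⁻¹ ^ M) * (cψ * ε ^ m * P ^ m) * P ^ (n + 1) := by
          apply mul_le_mul_of_nonneg_right _ (by positivity)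
          exact mul_le_mul (mul_le_mul_of_nonneg_left hB (norm_nonneg _)) hCb
            (norm_nonneg _) (by positivity)
      _ = (‖g ε x‖ * P ^ a) * (cu' * cψ * (ε⁻¹ ^ M * ε ^ m)) := by
          rw [ha, pow_add, pow_add]; ring
      _ ≤ (cg * ε⁻¹ ^ N) * (cu' * cψ * (ε⁻¹ ^ M * ε ^ m)) := by
          apply mul_le_mul_of_nonneg_right hA (by positivity)
      _ = cg * cu' * cψ * (ε⁻¹ ^ N * (ε⁻¹ ^ M * ε ^ m)) := by ring
      _ = D := by rw [hεq, hD]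
  -- conclude
  have hbd : Integrable (fun x : Fin n → ℝ => D * ((1 + ‖x‖) ^ (n + 1))⁻¹) :=
    hker.const_mul D
  calc ‖∫ x, g ε x * u ε x * (Φ₁ (ε • x) - Φ₂ (ε • x))‖
      ≤ ∫ x, D * ((1 + ‖x‖) ^ (n + 1))⁻¹ :=
        norm_integral_le_of_norm_le hbd (Filter.Eventually.of_forall hpt)
    _ = D * Kn := by rw [hKn, MeasureTheory.integral_const_mul]
    _ = cg * cu' * cψ * Kn * ε ^ q := by rw [hD]; ring
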